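/- Let p be a prime, ℓ a positive integer, and k ≥ 2ℓ. Let α = (a_1,…,a_k) ∈ (F_p ∪ {⋆})^k be a pattern with a_ℓ ≠ 0 and a_{ℓ+1} = ⋯ = a_k = 0. Then f_α(p, n) = Θ(n^{1/ℓ}). Moreover, if a_ℓ = 1 or a_ℓ = ⋆, then f_α(p, n) ~ (ℓ!·n)^{1/ℓ}. -/

import Mathlib

open Filter

/-- A family `F` of subsets of `[n]` (modeled as `Fin n`) is `α`-intersecting modulo `p` for a
pattern `α ∈ (F_p ∪ {⋆})^k` (a `⋆` entry is modeled as `none`, an entry `a ∈ F_p` as `some a`)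
if for each `j ∈ [k]`, any `j` pairwise distinct members of `F` have an intersection whose
cardinality is `≡ a_j (mod p)` when `a_j ∈ F_p`, and is `≢ 0 (mod p)` when `a_j = ⋆`. -/
def IsIntersectingStar (p k n : ℕ) (α : Fin k → Option (ZMod p))
    (F : Finset (Finset (Fin n))) : Prop :=
  ∀ (j : Fin k) (S : Finset (Finset (Fin n))), S ⊆ F → S.card = j.1 + 1 →
    match α j with
    | some a => ((S.inf id).card : ZMod p) = a
    | none => ((S.inf id).card : ZMod p) ≠ 0

/-- `fMaxStar p k n α` is the maximum size of an `α`-intersecting (mod `p`) family of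
subsets of `[n]`, for a pattern `α ∈ (F_p ∪ {⋆})^k`. -/
noncomputable def fMaxStar (p k n : ℕ) (α : Fin k → Option (ZMod p)) : ℕ :=
  sSup {m | ∃ F : Finset (Finset (Fin n)), IsIntersectingStar p k n α F ∧ F.card = m}

section Aux
open Finset

lemma dot_indicator {p n : ℕ} (A B : Finset (Fin n)) :
    ∑ x : Fin n, (if x ∈ A then (1:ZMod p) else 0) * (if x ∈ B then 1 else 0)
      = ((A ∩ B).card : ZMod p) := by
  rw [Finset.card_eq_sum_ones (A ∩ B), Nat.cast_sum]
  rw [← Finset.sum_filter_add_sum_filter_not Finset.univ (fun x => x ∈ A ∩ B)]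
  have h1 : ∀ x ∈ Finset.univ.filter (fun x => x ∈ A ∩ B),
      (if x ∈ A then (1:ZMod p) else 0) * (if x ∈ B then 1 else 0) = 1 := by
    intro x hx; simp only [mem_filter, mem_inter] at hx; simp [hx.2.1, hx.2.2]
  have h2 : ∀ x ∈ Finset.univ.filter (fun x => ¬ x ∈ A ∩ B),
      (if x ∈ A then (1:ZMod p) else 0) * (if x ∈ B then 1 else 0) = 0 := by
    intro x hx; simp only [mem_filter, mem_inter] at hx
    by_cases hA : x ∈ A <;> by_cases hB : x ∈ B <;> simp [hA, hB] at hx ⊢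
  rw [Finset.sum_congr rfl h1, Finset.sum_congr rfl h2, Finset.sum_const, Finset.sum_const]
  have : Finset.univ.filter (fun x => x ∈ A ∩ B) = A ∩ B := by
    ext x; simp
  rw [this]; simp

lemma upper_choose {p k n : ℕ} (hp : p.Prime) {l : ℕ} (hl : 1 ≤ l) (hk : 2 * l ≤ k)
    (α : Fin k → Option (ZMod p))
    (hne : α ⟨l - 1, by omega⟩ ≠ some 0)
    (h0 : ∀ i : Fin k, l ≤ i.1 → α i = some 0)
    (F : Finset (Finset (Fin n))) (hF : IsIntersectingStar p k n α F) :
    F.card.choose l ≤ n := by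
  haveI : Fact p.Prime := ⟨hp⟩
  set ι := {L // L ∈ F.powersetCard l} with hι
  set v : ι → (Fin n → ZMod p) :=
    fun L x => if x ∈ (L.1).inf id then 1 else 0 with hv
  have hmem : ∀ L : ι, L.1 ⊆ F ∧ L.1.card = l := by
    intro L; exact Finset.mem_powersetCard.mp L.2
  have hdiag : ∀ L : ι, (((L.1).inf id).card : ZMod p) ≠ 0 := by
    intro L
    have h := hF ⟨l - 1, by omega⟩ L.1 (hmem L).1 (by rw [(hmem L).2]; show l = l - 1 + 1; omega)
    revert h hne
    cases hα : α ⟨l - 1, by omega⟩ with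
    | none => intro hne h; exact h
    | some a =>
      intro hne h
      simp only at h
      rw [h]
      intro ha; exact hne (by rw [ha])
  have hoff : ∀ L M : ι, L ≠ M → ((((L.1) ∪ (M.1)).inf id).card : ZMod p) = 0 := by
    intro L M hLM
    have hcard : l < ((L.1) ∪ (M.1)).card := by
      have hsub : L.1 ⊆ L.1 ∪ M.1 := Finset.subset_union_left
      have hne' : L.1 ≠ L.1 ∪ M.1 := by
        intro h
        have h1 : M.1 ⊆ L.1 := by
          conv_rhs => rw [h]
          exact Finset.subset_union_right
        have h2 : M.1 = L.1 := Finset.eq_of_subset_of_card_le h1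
          (by rw [(hmem L).2, (hmem M).2])
        exact hLM (Subtype.ext h2.symm)
      have h3 := Finset.card_lt_card (Finset.ssubset_iff_subset_ne.mpr ⟨hsub, hne'⟩)
      rw [(hmem L).2] at h3; exact h3
    have hcard2 : ((L.1) ∪ (M.1)).card ≤ 2 * l := by
      have := Finset.card_union_le L.1 M.1
      rw [(hmem L).2, (hmem M).2] at this; omega
    set c := ((L.1) ∪ (M.1)).card with hc
    have hj : c - 1 < k := by omega
    have h := hF ⟨c - 1, hj⟩ (L.1 ∪ M.1) (Finset.union_subset (hmem L).1 (hmem M).1) (by show c = c - 1 + 1; omega)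
    rw [h0 ⟨c - 1, hj⟩ (by show l ≤ c - 1; omega)] at h
    exact h
  have hgram : ∀ L M : ι, ∑ x : Fin n, v L x * v M x
      = ((((L.1) ∪ (M.1)).inf id).card : ZMod p) := by
    intro L M
    rw [hv]
    simp only
    rw [dot_indicator, Finset.inf_union]
    rfl
  have hli : LinearIndependent (ZMod p) v := by
    rw [Fintype.linearIndependent_iff]
    intro g hg M
    have h2 : ∀ x, (∑ i, g i * v i x) = 0 := by
      intro x
      calc (∑ i, g i * v i x) = (∑ i, g i • v i) x := by simp [Finset.sum_apply]
      _ = 0 := by rw [hg]; rfl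
    have hev : ∑ i, g i * (∑ x : Fin n, v i x * v M x) = 0 := by
      calc ∑ i, g i * (∑ x : Fin n, v i x * v M x)
          = ∑ i, ∑ x : Fin n, g i * v i x * v M x := by
            simp_rw [Finset.mul_sum, mul_assoc]
        _ = ∑ x : Fin n, ∑ i, g i * v i x * v M x := Finset.sum_comm
        _ = ∑ x : Fin n, (∑ i, g i * v i x) * v M x := by simp_rw [Finset.sum_mul]
        _ = 0 := by simp [h2]
    rw [Finset.sum_eq_single M (fun i _ hiM => by
        rw [hgram, hoff i M hiM, mul_zero]) (by simp)] at hev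
    rw [hgram] at hev
    have hMM : M.1 ∪ M.1 = M.1 := Finset.union_self _
    rw [hMM] at hev
    exact (mul_eq_zero.mp hev).resolve_right (hdiag M)
  have hcard := hli.fintype_card_le_finrank
  rw [Module.finrank_fin_fun] at hcard
  rwa [Fintype.card_coe, Finset.card_powersetCard] at hcard

-- block size residues, defined by downward recursion
noncomputable def blockDelta (p l m : ℕ) (r : ℕ → ZMod p) : ℕ → ZMod p
  | d => r (l - d) - ∑ e ∈ (Finset.range d).attach,
      (((m - (l - d)).choose (d - e.1) : ZMod p) * blockDelta p l m r e.1)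
  decreasing_by exact Finset.mem_range.mp e.2

lemma blockDelta_eq (p l m : ℕ) (r : ℕ → ZMod p) (d : ℕ) :
    blockDelta p l m r d = r (l - d) - ∑ e ∈ Finset.range d,
      (((m - (l - d)).choose (d - e) : ZMod p) * blockDelta p l m r e) := by
  rw [blockDelta]
  congr 1
  exact Finset.sum_attach (Finset.range d)
    (fun e => ((m - (l - d)).choose (d - e) : ZMod p) * blockDelta p l m r e)

-- the pattern's target residues
noncomputable def patRes (p k : ℕ) (α : Fin k → Option (ZMod p)) (j : ℕ) : ZMod p :=
  if h : j - 1 < k then (α ⟨j - 1, h⟩).getD 1 else 1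

noncomputable def blockβ (p l m k : ℕ) (α : Fin k → Option (ZMod p)) (t : ℕ) : ℕ :=
  (blockDelta p l m (patRes p k α) (l - t)).val

lemma card_fin_lt (p b : ℕ) (hb : b ≤ p) :
    ((Finset.univ.filter (fun s : Fin p => s.1 < b))).card = b := by
  have h : ∀ x ∈ Finset.range b, x < p := fun x hx => lt_of_lt_of_le (Finset.mem_range.mp hx) hb
  have : (Finset.univ.filter (fun s : Fin p => s.1 < b)) = (Finset.range b).attachFin h := by
    ext a; simp [Finset.mem_attachFin]
  rw [this, Finset.card_attachFin, Finset.card_range]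

lemma card_supersets {m : ℕ} (S : Finset (Fin m)) (t : ℕ) (hjt : S.card ≤ t) :
    (Finset.univ.filter (fun T : Finset (Fin m) => S ⊆ T ∧ T.card = t)).card
      = (m - S.card).choose (t - S.card) := by
  rw [show (m - S.card).choose (t - S.card) = (Sᶜ.powersetCard (t - S.card)).card by
    rw [Finset.card_powersetCard, Finset.card_compl, Fintype.card_fin]]
  apply Finset.card_nbij' (fun T => T \ S) (fun R => R ∪ S)
  · intro T hT
    simp only [Finset.mem_coe, Finset.mem_filter, Finset.mem_univ, true_and] at hT
    rw [Finset.mem_coe, Finset.mem_powersetCard]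
    constructor
    · intro x hx
      rw [Finset.mem_compl]
      exact (Finset.mem_sdiff.mp hx).2
    · rw [Finset.card_sdiff_of_subset hT.1, hT.2]
  · intro R hR
    rw [Finset.mem_coe, Finset.mem_powersetCard] at hR
    simp only [Finset.mem_coe, Finset.mem_filter, Finset.mem_univ, true_and]
    have hdisj : Disjoint R S := by
      rw [Finset.disjoint_left]
      intro x hx hxS
      exact (Finset.mem_compl.mp (hR.1 hx)) hxS
    constructor
    · exact Finset.subset_union_right
    · rw [Finset.card_union_of_disjoint hdisj, hR.2]
      omega
  · intro T hT
    simp only [Finset.mem_coe, Finset.mem_filter, Finset.mem_univ, true_and] at hT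
    exact Finset.sdiff_union_of_subset hT.1
  · intro R hR
    rw [Finset.mem_coe, Finset.mem_powersetCard] at hR
    have hdisj : Disjoint R S := by
      rw [Finset.disjoint_left]
      intro x hx hxS
      exact (Finset.mem_compl.mp (hR.1 hx)) hxS
    show (R ∪ S) \ S = R
    rw [Finset.union_sdiff_right, Finset.sdiff_eq_self_of_disjoint hdisj]

/-- the "intersection pattern" finset of points over a given index set -/
def bigFilter (p l m : ℕ) (β : ℕ → ℕ) (S : Finset (Fin m)) :
    Finset (Finset (Fin m) × Fin p) :=
  Finset.univ.filter (fun a => S ⊆ a.1 ∧ a.1.card ≤ l ∧ a.2.1 < β a.1.card)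

lemma bigFilter_inter (p l m : ℕ) (β : ℕ → ℕ) (S S' : Finset (Fin m)) :
    bigFilter p l m β S ∩ bigFilter p l m β S' = bigFilter p l m β (S ∪ S') := by
  ext a
  simp only [bigFilter, Finset.mem_inter, Finset.mem_filter, Finset.mem_univ, true_and,
    Finset.union_subset_iff]
  tauto

lemma sum_fin_lt (p b : ℕ) (hb : b ≤ p) :
    (∑ s : Fin p, if s.1 < b then (1:ℕ) else 0) = b := by
  rw [← Finset.sum_filter, Finset.sum_const, smul_eq_mul, mul_one, card_fin_lt p b hb]

lemma bigFilter_card (p l m : ℕ) (β : ℕ → ℕ) (hβ : ∀ t, β t ≤ p) (S : Finset (Fin m)) :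
    (bigFilter p l m β S).card
      = ∑ t ∈ Finset.Icc S.card l, (m - S.card).choose (t - S.card) * β t := by
  classical
  rw [bigFilter, Finset.card_filter, Fintype.sum_prod_type]
  have hinner : ∀ T : Finset (Fin m),
      (∑ s : Fin p, if S ⊆ T ∧ T.card ≤ l ∧ s.1 < β T.card then 1 else 0)
      = if S ⊆ T ∧ T.card ≤ l then β T.card else 0 := by
    intro T
    by_cases h : S ⊆ T ∧ T.card ≤ l
    · simp only [h.1, h.2, true_and, if_true]
      exact sum_fin_lt p (β T.card) (hβ _)
    · rw [if_neg h]
      apply Finset.sum_eq_zero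
      intro s _
      rw [if_neg]
      tauto
  rw [Finset.sum_congr rfl (fun T _ => hinner T)]
  rw [← Finset.sum_filter]
  have hmaps : ∀ T ∈ Finset.univ.filter (fun T : Finset (Fin m) => S ⊆ T ∧ T.card ≤ l),
      T.card ∈ Finset.Icc S.card l := by
    intro T hT
    simp only [Finset.mem_filter, Finset.mem_univ, true_and] at hT
    exact Finset.mem_Icc.mpr ⟨Finset.card_le_card hT.1, hT.2⟩
  rw [← Finset.sum_fiberwise_of_maps_to hmaps (fun T => β T.card)]
  apply Finset.sum_congr rfl
  intro t ht
  rw [Finset.mem_Icc] at ht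
  have hfib : (Finset.univ.filter (fun T : Finset (Fin m) => S ⊆ T ∧ T.card ≤ l)).filter
      (fun T => T.card = t)
      = Finset.univ.filter (fun T : Finset (Fin m) => S ⊆ T ∧ T.card = t) := by
    ext T
    simp only [Finset.mem_filter, Finset.mem_univ, true_and]
    constructor
    · rintro ⟨⟨h1, _⟩, h3⟩; exact ⟨h1, h3⟩
    · rintro ⟨h1, h2⟩; exact ⟨⟨h1, h2 ▸ ht.2⟩, h2⟩
  rw [hfib]
  rw [Finset.sum_congr rfl (fun T hT => by
    rw [(Finset.mem_filter.mp hT).2.2])]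
  rw [Finset.sum_const, card_supersets S t ht.1, smul_eq_mul]

lemma inf_bigFilter (p l m : ℕ) (β : ℕ → ℕ) (S' : Finset (Fin m)) (hS' : S'.Nonempty) :
    S'.inf (fun i => bigFilter p l m β {i}) = bigFilter p l m β S' := by
  induction hS' using Finset.Nonempty.cons_induction with
  | singleton a => rw [Finset.inf_singleton]
  | cons a s ha hs ih =>
    rw [Finset.inf_cons, ih, Finset.inf_eq_inter, bigFilter_inter]
    congr 1
    rw [Finset.cons_eq_insert, Finset.insert_eq]

lemma bigFilter_resid (p l k m : ℕ) [NeZero p] (α : Fin k → Option (ZMod p))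
    (j : ℕ) (hj1 : 1 ≤ j) (hjl : j ≤ l) :
    ((∑ t ∈ Finset.Icc j l, (m - j).choose (t - j) * blockβ p l m k α t : ℕ) : ZMod p)
      = patRes p k α j := by
  set r := patRes p k α with hr
  set d := l - j with hd
  push_cast
  have hcast : ∀ t, ((blockβ p l m k α t : ℕ) : ZMod p)
      = blockDelta p l m r (l - t) := by
    intro t; rw [blockβ, ZMod.natCast_zmod_val]
  have hre : (∑ t ∈ Finset.Icc j l, ((m - j).choose (t - j) : ZMod p) * (blockβ p l m k α t : ℕ))
      = ∑ e ∈ Finset.range (d + 1), ((m - j).choose (d - e) : ZMod p) * blockDelta p l m r e := by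
    apply Finset.sum_nbij' (fun t => l - t) (fun e => l - e)
    · intro t ht
      rw [Finset.mem_Icc] at ht
      rw [Finset.mem_range]
      omega
    · intro e he
      rw [Finset.mem_range] at he
      rw [Finset.mem_Icc]
      omega
    · intro t ht
      rw [Finset.mem_Icc] at ht
      omega
    · intro e he
      rw [Finset.mem_range] at he
      omega
    · intro t ht
      rw [Finset.mem_Icc] at ht
      rw [hcast t, show d - (l - t) = t - j by omega]
  rw [hre, Finset.sum_range_succ, Nat.sub_self, Nat.choose_zero_right, Nat.cast_one, one_mul]
  rw [blockDelta_eq p l m r d]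
  have hld : l - d = j := by omega
  rw [hld]
  ring

lemma inf_map_subtype {ι γ A : Type*} [DecidableEq γ] [DecidableEq A] [Fintype γ] [Fintype A]
    (U : Finset A) (g : {x // x ∈ U} ↪ γ) (f : ι → Finset A)
    (S' : Finset ι) (hS' : S'.Nonempty) :
    S'.inf (fun i => ((f i).subtype (· ∈ U)).map g)
      = ((S'.inf f).subtype (· ∈ U)).map g := by
  have hkey : ∀ x y : Finset A,
      ((x.subtype (· ∈ U)).map g) ∩ ((y.subtype (· ∈ U)).map g)
        = (((x ∩ y).subtype (· ∈ U)).map g) := by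
    intro x y
    rw [← Finset.map_inter]
    congr 1
    ext a
    simp [Finset.mem_subtype]
  induction hS' using Finset.Nonempty.cons_induction with
  | singleton a => rw [Finset.inf_singleton, Finset.inf_singleton]
  | cons a s ha hs ih =>
    rw [Finset.inf_cons, Finset.inf_cons, ih, Finset.inf_eq_inter, Finset.inf_eq_inter, hkey]

lemma construction {p k l : ℕ} (hp : p.Prime) (hl : 1 ≤ l) (hk : 2 * l ≤ k)
    (α : Fin k → Option (ZMod p))
    (hne : α ⟨l - 1, by omega⟩ ≠ some 0)
    (h0 : ∀ i : Fin k, l ≤ i.1 → α i = some 0)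
    (m n : ℕ) (hm : l + 1 ≤ m)
    (hn : ∑ t ∈ Finset.Icc 0 l, m.choose t * blockβ p l m k α t ≤ n) :
    ∃ F : Finset (Finset (Fin n)), IsIntersectingStar p k n α F ∧ F.card = m := by
  haveI : Fact p.Prime := ⟨hp⟩
  haveI : NeZero p := ⟨hp.pos.ne'⟩
  classical
  set r := patRes p k α with hr
  set β := blockβ p l m k α with hβdef
  have hβp : ∀ t, β t ≤ p := fun t => le_of_lt (ZMod.val_lt _)
  have hrl : r l ≠ 0 := by
    rw [hr, patRes]
    have h1 : l - 1 < k := by omega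
    rw [dif_pos h1]
    cases hα : α ⟨l - 1, h1⟩ with
    | none => exact one_ne_zero
    | some a =>
      simp only [Option.getD_some]
      intro h
      exact hne (by rw [show (⟨l - 1, by omega⟩ : Fin k) = ⟨l - 1, h1⟩ from rfl, hα, h])
  have hβl : β l = (r l).val := by
    rw [hβdef, blockβ, Nat.sub_self, blockDelta_eq]
    simp [hr]
  have hβlpos : 0 < β l := by
    rw [hβl]
    rcases Nat.eq_zero_or_pos (r l).val with h | h
    · exact absurd ((ZMod.val_eq_zero _).mp h) hrl
    · exact h
  set U := bigFilter p l m β ∅ with hU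
  have hUn : U.card ≤ n := by
    rw [hU, bigFilter_card p l m β hβp ∅]
    simpa using hn
  have hcardle : Fintype.card {x // x ∈ U} ≤ Fintype.card (Fin n) := by
    rw [Fintype.card_coe, Fintype.card_fin]; exact hUn
  obtain ⟨g⟩ := Function.Embedding.nonempty_of_card_le hcardle
  set Fi0 : Fin m → Finset (Finset (Fin m) × Fin p) := fun i => bigFilter p l m β {i} with hFi0
  have hsubU : ∀ i, Fi0 i ⊆ U := by
    intro i a ha
    simp only [hFi0, hU, bigFilter, Finset.mem_filter, Finset.mem_univ, true_and] at ha ⊢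
    exact ⟨Finset.empty_subset _, ha.2⟩
  set Fi : Fin m → Finset (Fin n) := fun i => ((Fi0 i).subtype (· ∈ U)).map g with hFi
  have hinj : Function.Injective Fi := by
    intro i i' hii
    by_contra hne'
    have hcompl : l - 1 ≤ (Finset.univ \ {i, i'} : Finset (Fin m)).card := by
      rw [Finset.card_sdiff_of_subset (Finset.subset_univ _), Finset.card_univ, Fintype.card_fin]
      have : ({i, i'} : Finset (Fin m)).card ≤ 2 := Finset.card_insert_le _ _ |>.trans (by simp)
      omega
    obtain ⟨T0, hT0sub, hT0card⟩ := Finset.exists_subset_card_eq hcompl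
    have hiT0 : i ∉ T0 := fun h => by simpa using (hT0sub h)
    have hi'T0 : i' ∉ T0 := fun h => by simpa using (hT0sub h)
    set T := insert i T0 with hT
    have hiT : i ∈ T := Finset.mem_insert_self _ _
    have hi'T : i' ∉ T := by
      rw [hT, Finset.mem_insert]
      rintro (h | h)
      · exact hne' h.symm
      · exact hi'T0 h
    have hTcard : T.card = l := by
      rw [hT, Finset.card_insert_of_notMem hiT0, hT0card]; omega
    set a : Finset (Fin m) × Fin p := (T, ⟨0, hp.pos⟩) with haa
    have ha : a ∈ Fi0 i := by
      rw [hFi0]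
      simp only [bigFilter, Finset.mem_filter, Finset.mem_univ, true_and]
      refine ⟨Finset.singleton_subset_iff.mpr hiT, le_of_eq hTcard, ?_⟩
      show 0 < β T.card
      rw [hTcard]; exact hβlpos
    have ha' : a ∉ Fi0 i' := by
      rw [hFi0]
      simp only [bigFilter, Finset.mem_filter, Finset.mem_univ, true_and]
      rintro ⟨h1, _, _⟩
      exact hi'T (Finset.singleton_subset_iff.mp h1)
    have hsteq : (Fi0 i).subtype (· ∈ U) = (Fi0 i').subtype (· ∈ U) :=
      Finset.map_injective g hii
    have : Fi0 i = Fi0 i' := by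
      have h1 := congrArg (Finset.map (Function.Embedding.subtype (· ∈ U))) hsteq
      rwa [Finset.subtype_map, Finset.subtype_map,
        Finset.filter_true_of_mem (fun x hx => hsubU i hx),
        Finset.filter_true_of_mem (fun x hx => hsubU i' hx)] at h1
    rw [this] at ha
    exact ha' ha
  refine ⟨Finset.univ.image Fi, ?_, ?_⟩
  swap
  · rw [Finset.card_image_of_injective _ hinj, Finset.card_univ, Fintype.card_fin]
  intro j S hS hScard
  set S' := Finset.univ.filter (fun i => Fi i ∈ S) with hS'
  have hSim : S'.image Fi = S := by
    ext s
    simp only [Finset.mem_image, hS', Finset.mem_filter, Finset.mem_univ, true_and]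
    constructor
    · rintro ⟨i, hi, rfl⟩; exact hi
    · intro hs
      obtain ⟨i, _, rfl⟩ := Finset.mem_image.mp (hS hs)
      exact ⟨i, hs, rfl⟩
  have hS'card : S'.card = j.1 + 1 := by
    rw [← hScard, ← hSim, Finset.card_image_of_injective _ hinj]
  have hS'ne : S'.Nonempty := Finset.card_pos.mp (by omega)
  have hinf1 : S.inf id = S'.inf Fi := by
    rw [← hSim, Finset.inf_image]
    rfl
  have hinf2 : S'.inf Fi = ((S'.inf Fi0).subtype (· ∈ U)).map g :=
    inf_map_subtype U g Fi0 S' hS'ne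
  have hinfsubU : S'.inf Fi0 ⊆ U := by
    obtain ⟨i, hi⟩ := hS'ne
    exact le_trans (Finset.inf_le hi) (hsubU i)
  have hcardeq : (S.inf id).card = (bigFilter p l m β S').card := by
    rw [hinf1, hinf2, Finset.card_map, Finset.card_subtype,
      Finset.filter_true_of_mem (fun x hx => hinfsubU hx), ← inf_bigFilter p l m β S' hS'ne]
  by_cases hjl : j.1 + 1 ≤ l
  · have hres := bigFilter_resid p l k m α (j.1 + 1) (by omega) hjl
    have hcastval : ((S.inf id).card : ZMod p) = patRes p k α (j.1 + 1) := by
      rw [hcardeq, bigFilter_card p l m β hβp S', hS'card]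
      exact hres
    have hpat : patRes p k α (j.1 + 1) = (α j).getD 1 := by
      have hjj : (⟨j.1 + 1 - 1, by omega⟩ : Fin k) = j := Fin.ext (by simp)
      rw [patRes, dif_pos (show j.1 + 1 - 1 < k by omega), hjj]
    cases hα : α j with
    | some a =>
      rw [hcastval, hpat, hα, Option.getD_some]
    | none =>
      rw [hcastval, hpat, hα, Option.getD_none]
      exact one_ne_zero
  · rw [h0 j (by omega)]
    show ((S.inf id).card : ZMod p) = 0
    rw [hcardeq, bigFilter_card p l m β hβp S', hS'card]
    rw [Finset.Icc_eq_empty (by omega), Finset.sum_empty, Nat.cast_zero]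

lemma fMax_bddAbove (p k n : ℕ) (α : Fin k → Option (ZMod p)) :
    BddAbove {m | ∃ F : Finset (Finset (Fin n)), IsIntersectingStar p k n α F ∧ F.card = m} := by
  refine ⟨Fintype.card (Finset (Fin n)), ?_⟩
  rintro m ⟨F, _, rfl⟩
  exact Finset.card_le_univ F

lemma fMax_nonempty (p k n : ℕ) (α : Fin k → Option (ZMod p)) :
    Set.Nonempty {m | ∃ F : Finset (Finset (Fin n)), IsIntersectingStar p k n α F ∧ F.card = m} := by
  refine ⟨0, ∅, ?_, Finset.card_empty⟩
  intro j S hS hcard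
  have : S = ∅ := Finset.subset_empty.mp hS
  rw [this] at hcard
  simp at hcard

lemma le_fMax {p k n : ℕ} {α : Fin k → Option (ZMod p)} {F : Finset (Finset (Fin n))}
    (hF : IsIntersectingStar p k n α F) : F.card ≤ fMaxStar p k n α :=
  le_csSup (fMax_bddAbove p k n α) ⟨F, hF, rfl⟩

lemma fMax_mem (p k n : ℕ) (α : Fin k → Option (ZMod p)) :
    ∃ F : Finset (Finset (Fin n)), IsIntersectingStar p k n α F ∧ F.card = fMaxStar p k n α :=
  Nat.sSup_mem (fMax_nonempty p k n α) (fMax_bddAbove p k n α)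

lemma fMax_choose_le {p k l : ℕ} (hp : p.Prime) (hl : 1 ≤ l) (hk : 2 * l ≤ k)
    (α : Fin k → Option (ZMod p))
    (hne : α ⟨l - 1, by omega⟩ ≠ some 0)
    (h0 : ∀ i : Fin k, l ≤ i.1 → α i = some 0) (n : ℕ) :
    (fMaxStar p k n α).choose l ≤ n := by
  obtain ⟨F, hF, hc⟩ := fMax_mem p k n α
  rw [← hc]
  exact upper_choose hp hl hk α hne h0 F hF

lemma fMax_ge {p k l : ℕ} (hp : p.Prime) (hl : 1 ≤ l) (hk : 2 * l ≤ k)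
    (α : Fin k → Option (ZMod p))
    (hne : α ⟨l - 1, by omega⟩ ≠ some 0)
    (h0 : ∀ i : Fin k, l ≤ i.1 → α i = some 0)
    (m n : ℕ) (hm : l + 1 ≤ m)
    (hn : blockβ p l m k α l * m.choose l + p * l * m ^ (l - 1) ≤ n) :
    m ≤ fMaxStar p k n α := by
  haveI : NeZero p := ⟨hp.pos.ne'⟩
  have hsum : ∑ t ∈ Finset.Icc 0 l, m.choose t * blockβ p l m k α t ≤ n := by
    have hsplit : ∑ t ∈ Finset.Icc 0 l, m.choose t * blockβ p l m k α t
        = (∑ t ∈ Finset.Icc 0 (l - 1), m.choose t * blockβ p l m k α t)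
          + m.choose l * blockβ p l m k α l := by
      obtain ⟨l', hl'⟩ : ∃ l', l = l' + 1 := ⟨l - 1, by omega⟩
      rw [hl', Finset.sum_Icc_succ_top (Nat.zero_le _), Nat.add_sub_cancel]
    have hsmall : ∀ t ∈ Finset.Icc 0 (l - 1),
        m.choose t * blockβ p l m k α t ≤ m ^ (l - 1) * p := by
      intro t ht
      rw [Finset.mem_Icc] at ht
      apply Nat.mul_le_mul
      · calc m.choose t ≤ m.descFactorial t := by
              rw [Nat.descFactorial_eq_factorial_mul_choose]
              exact Nat.le_mul_of_pos_left _ (Nat.factorial_pos t)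
          _ ≤ m ^ t := Nat.descFactorial_le_pow m t
          _ ≤ m ^ (l - 1) := Nat.pow_le_pow_right (by omega) ht.2
      · exact le_of_lt (ZMod.val_lt _)
    calc ∑ t ∈ Finset.Icc 0 l, m.choose t * blockβ p l m k α t
        = (∑ t ∈ Finset.Icc 0 (l - 1), m.choose t * blockβ p l m k α t)
          + m.choose l * blockβ p l m k α l := hsplit
      _ ≤ (l - 1 + 1 - 0) * (m ^ (l - 1) * p)
          + m.choose l * blockβ p l m k α l := by
          refine Nat.add_le_add_right ?_ _
          have h := Finset.sum_le_card_nsmul (Finset.Icc 0 (l - 1)) _ _ hsmall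
          rwa [Nat.card_Icc, smul_eq_mul] at h
      _ = l * (m ^ (l - 1) * p) + m.choose l * blockβ p l m k α l := by
          have hco : l - 1 + 1 - 0 = l := by omega
          rw [hco]
      _ ≤ n := by
          calc l * (m ^ (l - 1) * p) + m.choose l * blockβ p l m k α l
              = blockβ p l m k α l * m.choose l + p * l * m ^ (l - 1) := by ring
            _ ≤ n := hn
  obtain ⟨F, hF, hFc⟩ := construction hp hl hk α hne h0 m n hm hsum
  rw [← hFc]
  exact le_fMax hF

end Aux

theorem stmt19 (p : ℕ) (hp : p.Prime) (l k : ℕ) (hl : 1 ≤ l) (hk : 2 * l ≤ k)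
    (α : Fin k → Option (ZMod p))
    (hne : α ⟨l - 1, by omega⟩ ≠ some 0)
    (h0 : ∀ i : Fin k, l ≤ i.1 → α i = some 0) :
    (∃ c₁ c₂ : ℝ, 0 < c₁ ∧ 0 < c₂ ∧ ∀ᶠ n : ℕ in atTop,
      c₁ * (n : ℝ) ^ ((1 : ℝ) / (l : ℝ)) ≤ (fMaxStar p k n α : ℝ) ∧
      (fMaxStar p k n α : ℝ) ≤ c₂ * (n : ℝ) ^ ((1 : ℝ) / (l : ℝ))) ∧
    ((α ⟨l - 1, by omega⟩ = some 1 ∨ α ⟨l - 1, by omega⟩ = none) →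
      Tendsto (fun n : ℕ => (fMaxStar p k n α : ℝ) /
        (((l.factorial : ℝ) * (n : ℝ)) ^ ((1 : ℝ) / (l : ℝ)))) atTop (nhds 1)) := by
  haveI : Fact p.Prime := ⟨hp⟩
  haveI : NeZero p := ⟨hp.pos.ne'⟩
  haveI : Fact (1 < p) := ⟨hp.one_lt⟩
  have hlR : (0:ℝ) < l := by exact_mod_cast hl
  have hl0 : (l:ℝ) ≠ 0 := hlR.ne'
  have hinv : (0:ℝ) < 1/(l:ℝ) := by positivity
  have hppos : (0:ℝ) < p := by exact_mod_cast hp.pos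
  have hpowinv : ∀ x : ℝ, 0 ≤ x → (x ^ (l:ℕ)) ^ ((1:ℝ)/(l:ℝ)) = x := by
    intro x hx
    rw [← Real.rpow_natCast x l, ← Real.rpow_mul hx, mul_one_div, div_self hl0,
      Real.rpow_one]
  have hrinv : ∀ y : ℝ, 0 ≤ y → (y ^ ((1:ℝ)/(l:ℝ))) ^ (l:ℕ) = y := by
    intro y hy
    rw [← Real.rpow_natCast (y ^ ((1:ℝ)/(l:ℝ))) l, ← Real.rpow_mul hy, one_div,
      inv_mul_cancel₀ hl0, Real.rpow_one]
  have hupper : ∀ n : ℕ, (fMaxStar p k n α : ℝ)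
      ≤ ((l.factorial : ℝ) * n) ^ ((1:ℝ)/(l:ℝ)) + l := by
    intro n
    have hch := fMax_choose_le hp hl hk α hne h0 n
    set M := fMaxStar p k n α with hM
    have h1 : (M + 1 - l)^l ≤ l.factorial * n := by
      calc (M + 1 - l)^l ≤ M.descFactorial l := Nat.pow_sub_le_descFactorial M l
        _ = l.factorial * M.choose l := Nat.descFactorial_eq_factorial_mul_choose M l
        _ ≤ l.factorial * n := Nat.mul_le_mul_left _ hch
    have h3 : (((M + 1 - l : ℕ):ℝ)) ^ (l:ℕ) ≤ (l.factorial : ℝ) * n := by exact_mod_cast h1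
    have h2 : ((M + 1 - l : ℕ) : ℝ) ≤ ((l.factorial : ℝ) * n) ^ ((1:ℝ)/(l:ℝ)) := by
      calc ((M + 1 - l : ℕ):ℝ) = ((((M + 1 - l : ℕ):ℝ)) ^ (l:ℕ)) ^ ((1:ℝ)/(l:ℝ)) :=
            (hpowinv _ (Nat.cast_nonneg _)).symm
        _ ≤ ((l.factorial : ℝ) * n) ^ ((1:ℝ)/(l:ℝ)) :=
            Real.rpow_le_rpow (by positivity) h3 (le_of_lt hinv)
    have h4 : M ≤ (M + 1 - l) + l := by omega
    have h5 : (M:ℝ) ≤ ((M + 1 - l : ℕ):ℝ) + l := by exact_mod_cast h4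
    linarith
  constructor
  · -- part 1
    set c : ℝ := ((1:ℝ)/(2*p*l)) ^ ((1:ℝ)/(l:ℝ)) with hc
    have hcpos : 0 < c := by rw [hc]; positivity
    refine ⟨c/2, (l.factorial : ℝ) ^ ((1:ℝ)/(l:ℝ)) + l, by positivity, by positivity, ?_⟩
    have hy : Tendsto (fun n : ℕ => ((n:ℝ)/(2*p*l)) ^ ((1:ℝ)/(l:ℝ))) atTop atTop :=
      (tendsto_rpow_atTop hinv).comp
        (tendsto_natCast_atTop_atTop.atTop_div_const (by positivity))
    filter_upwards [hy.eventually_ge_atTop ((l:ℝ)+2), eventually_ge_atTop 1] with n hyn hn1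
    set y := ((n:ℝ)/(2*p*l)) ^ ((1:ℝ)/(l:ℝ)) with hydef
    have hy0 : (0:ℝ) ≤ y := Real.rpow_nonneg (by positivity) _
    set m := ⌊y⌋₊ with hm
    have hml : l + 1 ≤ m := by
      apply Nat.le_floor
      push_cast
      linarith
    have hmy : (m:ℝ) ≤ y := Nat.floor_le hy0
    have hyl : y ^ (l:ℕ) = (n:ℝ)/(2*p*l) := hrinv _ (by positivity)
    have hnat : 2*p*l*m^l ≤ n := by
      have h5 : (m:ℝ)^(l:ℕ) ≤ (n:ℝ)/(2*p*l) := by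
        rw [← hyl]
        exact pow_le_pow_left₀ (Nat.cast_nonneg m) hmy l
      have hrr : ((2*p*l*m^l : ℕ):ℝ) ≤ (n:ℝ) := by
        push_cast
        calc (2:ℝ)*p*l*(m:ℝ)^(l:ℕ) ≤ (2*p*l) * ((n:ℝ)/(2*p*l)) := by
              have h2pl : (0:ℝ) ≤ 2*p*l := by positivity
              calc (2:ℝ)*p*l*(m:ℝ)^(l:ℕ) = (2*p*l) * ((m:ℝ)^(l:ℕ)) := by ring
                _ ≤ (2*p*l) * ((n:ℝ)/(2*p*l)) := mul_le_mul_of_nonneg_left h5 h2pl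
          _ = n := by field_simp
      exact_mod_cast hrr
    have hcond : blockβ p l m k α l * m.choose l + p * l * m ^ (l - 1) ≤ n := by
      have hb1 : blockβ p l m k α l ≤ p := le_of_lt (ZMod.val_lt _)
      have hch : m.choose l ≤ m ^ l := by
        calc m.choose l ≤ m.descFactorial l := by
              rw [Nat.descFactorial_eq_factorial_mul_choose]
              exact Nat.le_mul_of_pos_left _ (Nat.factorial_pos l)
          _ ≤ m ^ l := Nat.descFactorial_le_pow m l
      have hpow : m ^ (l-1) ≤ m ^ l := Nat.pow_le_pow_right (by omega) (by omega)
      calc blockβ p l m k α l * m.choose l + p * l * m ^ (l - 1)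
          ≤ p * m^l + p * l * m^l :=
            Nat.add_le_add (Nat.mul_le_mul hb1 hch) (Nat.mul_le_mul_left _ hpow)
        _ = p * (1 + l) * m^l := by ring
        _ ≤ 2*p*l*m^l := by
            apply Nat.mul_le_mul_right
            calc p * (1 + l) ≤ p * (2*l) := Nat.mul_le_mul_left _ (by omega)
              _ = 2*p*l := by ring
        _ ≤ n := hnat
    have hfm := fMax_ge hp hl hk α hne h0 m n hml hcond
    have hfmR : (m:ℝ) ≤ (fMaxStar p k n α : ℝ) := Nat.cast_le.mpr hfm
    constructor
    · have hflr : y - 1 ≤ (m:ℝ) := le_of_lt (Nat.sub_one_lt_floor y)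
      have hy2 : (2:ℝ) ≤ y := by
        have : (0:ℝ) ≤ l := Nat.cast_nonneg l
        linarith
      have hyc : y = c * (n:ℝ)^((1:ℝ)/(l:ℝ)) := by
        rw [hydef, hc, ← Real.mul_rpow (by positivity) (Nat.cast_nonneg n)]
        congr 1
        ring
      have h6 : c * (n:ℝ)^((1:ℝ)/(l:ℝ)) / 2 ≤ (m:ℝ) := by
        rw [← hyc]
        linarith
      calc (c/2) * (n:ℝ)^((1:ℝ)/(l:ℝ)) = c * (n:ℝ)^((1:ℝ)/(l:ℝ))/2 := by ring
        _ ≤ (m:ℝ) := h6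
        _ ≤ (fMaxStar p k n α : ℝ) := hfmR
    · have h7 := hupper n
      have hn1R : (1:ℝ) ≤ (n:ℝ)^((1:ℝ)/(l:ℝ)) :=
        Real.one_le_rpow (by exact_mod_cast hn1) (le_of_lt hinv)
      have hsplit : ((l.factorial:ℝ) * n) ^ ((1:ℝ)/(l:ℝ))
          = (l.factorial:ℝ)^((1:ℝ)/(l:ℝ)) * (n:ℝ)^((1:ℝ)/(l:ℝ)) :=
        Real.mul_rpow (by positivity) (Nat.cast_nonneg n)
      have h8 : (l:ℝ) ≤ l * (n:ℝ)^((1:ℝ)/(l:ℝ)) :=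
        le_mul_of_one_le_right (Nat.cast_nonneg l) hn1R
      rw [hsplit] at h7
      calc (fMaxStar p k n α : ℝ)
          ≤ (l.factorial:ℝ)^((1:ℝ)/(l:ℝ)) * (n:ℝ)^((1:ℝ)/(l:ℝ)) + l := h7
        _ ≤ (l.factorial:ℝ)^((1:ℝ)/(l:ℝ)) * (n:ℝ)^((1:ℝ)/(l:ℝ))
            + l * (n:ℝ)^((1:ℝ)/(l:ℝ)) := by linarith
        _ = ((l.factorial : ℝ) ^ ((1:ℝ)/(l:ℝ)) + l) * (n:ℝ)^((1:ℝ)/(l:ℝ)) := by ring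
  · -- part 2
    intro hsh
    have hβl1 : ∀ m, blockβ p l m k α l = 1 := by
      intro m
      rw [blockβ, Nat.sub_self, blockDelta_eq]
      simp only [Finset.range_zero, Finset.sum_empty, sub_zero, Nat.sub_zero]
      rw [patRes, dif_pos (show l - 1 < k by omega)]
      have hfix : (⟨l - 1, show l - 1 < k by omega⟩ : Fin k) = ⟨l - 1, by omega⟩ := rfl
      rw [hfix]
      rcases hsh with h | h
      · rw [h, Option.getD_some, ZMod.val_one]
      · rw [h, Option.getD_none, ZMod.val_one]
    set D := p * l * l.factorial with hD
    set x : ℕ → ℝ := fun n => ((l.factorial : ℝ) * n) ^ ((1:ℝ)/(l:ℝ)) with hx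
    have hxat : Tendsto x atTop atTop :=
      (tendsto_rpow_atTop hinv).comp
        (tendsto_natCast_atTop_atTop.const_mul_atTop (by positivity))
    apply tendsto_of_tendsto_of_tendsto_of_le_of_le'
      (g := fun n : ℕ => 1 - (1 + (D:ℝ))/(x n)) (h := fun n : ℕ => 1 + (l:ℝ)/(x n))
    · have h1 : Tendsto (fun n : ℕ => (1 + (D:ℝ))/(x n)) atTop (nhds 0) :=
        Filter.Tendsto.div_atTop tendsto_const_nhds hxat
      simpa using (tendsto_const_nhds.sub h1)
    · have h1 : Tendsto (fun n : ℕ => ((l:ℕ):ℝ)/(x n)) atTop (nhds 0) :=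
        Filter.Tendsto.div_atTop tendsto_const_nhds hxat
      simpa using (tendsto_const_nhds.add h1)
    · -- lower
      filter_upwards [hxat.eventually_ge_atTop ((D:ℝ) + l + 2),
        hxat.eventually_ge_atTop 1] with n hx1 hx2
      have hx0 : (0:ℝ) < x n := lt_of_lt_of_le one_pos hx2
      set m := ⌊x n⌋₊ - D with hm
      have hfl : D + l + 1 ≤ ⌊x n⌋₊ := by
        apply Nat.le_floor
        push_cast
        linarith
      have hml : l + 1 ≤ m := by omega
      have hflo : (⌊x n⌋₊ : ℝ) ≤ x n := Nat.floor_le (le_of_lt hx0)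
      have hmR : (m:ℝ) ≤ x n - D := by
        rw [hm, Nat.cast_sub (by omega)]
        linarith
      have hm0 : (0:ℝ) ≤ (m:ℝ) := Nat.cast_nonneg m
      have hD0 : (0:ℝ) ≤ (D:ℝ) := Nat.cast_nonneg D
      have hmx : (m:ℝ) ≤ x n := by linarith
      have hxl : (x n)^(l:ℕ) = (l.factorial:ℝ) * n := hrinv _ (by positivity)
      have hkey : (m:ℝ)^(l:ℕ) + (D:ℝ) * (m:ℝ)^((l-1 : ℕ)) ≤ (l.factorial:ℝ) * n := by
        have hxn0 : (0:ℝ) ≤ x n := le_of_lt hx0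
        have e1 : (m:ℝ)^(l:ℕ) ≤ (x n)^((l-1:ℕ)) * (x n - D) := by
          calc (m:ℝ)^(l:ℕ) = (m:ℝ)^((l-1:ℕ)) * m := by
                rw [← pow_succ]
                congr 1
                omega
            _ ≤ (x n)^((l-1:ℕ)) * (x n - D) :=
                mul_le_mul (pow_le_pow_left₀ hm0 hmx _) hmR hm0 (by positivity)
        have e2 : (D:ℝ) * (m:ℝ)^((l-1:ℕ)) ≤ (D:ℝ) * (x n)^((l-1:ℕ)) :=
          mul_le_mul_of_nonneg_left (pow_le_pow_left₀ hm0 hmx _) hD0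
        have e4 : (x n)^((l-1:ℕ)) * (x n) = (x n)^(l:ℕ) := by
          rw [← pow_succ]
          congr 1
          omega
        have e5 : (m:ℝ)^(l:ℕ) + (D:ℝ) * (m:ℝ)^((l-1:ℕ)) ≤ (x n)^((l-1:ℕ)) * (x n) := by
          have : (x n)^((l-1:ℕ)) * (x n - D) + (D:ℝ) * (x n)^((l-1:ℕ))
              = (x n)^((l-1:ℕ)) * (x n) := by ring
          linarith
        rw [e4, hxl] at e5
        exact e5
      have hcond : blockβ p l m k α l * m.choose l + p * l * m ^ (l - 1) ≤ n := by
        rw [hβl1 m, one_mul]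
        have hn1 : l.factorial * m.choose l ≤ m^l := by
          rw [← Nat.descFactorial_eq_factorial_mul_choose]
          exact Nat.descFactorial_le_pow m l
        have hn2 : m^l + l.factorial * (p*l*m^(l-1)) ≤ l.factorial * n := by
          have hcast : ((m^l + l.factorial * (p*l*m^(l-1)) : ℕ):ℝ)
              ≤ ((l.factorial * n : ℕ):ℝ) := by
            push_cast
            have hDm : (l.factorial:ℝ) * ((p:ℝ)*l*(m:ℝ)^((l-1:ℕ)))
                = (D:ℝ) * (m:ℝ)^((l-1:ℕ)) := by
              rw [hD]
              push_cast
              ring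
            linarith [hkey]
          exact_mod_cast hcast
        have h9 : l.factorial * (m.choose l + p*l*m^(l-1)) ≤ l.factorial * n := by
          rw [Nat.mul_add]
          omega
        exact Nat.le_of_mul_le_mul_left h9 (Nat.factorial_pos l)
      have hfm := fMax_ge hp hl hk α hne h0 m n hml hcond
      have hfmR : (m:ℝ) ≤ (fMaxStar p k n α : ℝ) := Nat.cast_le.mpr hfm
      have h5 : x n - 1 - D < (⌊x n⌋₊ : ℝ) - D := by
        have := Nat.sub_one_lt_floor (x n)
        linarith
      have h6 : ((⌊x n⌋₊ : ℝ) - (D:ℝ)) = (m:ℝ) := by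
        rw [hm, Nat.cast_sub (by omega)]
      have h7 : x n - (1 + D) ≤ (fMaxStar p k n α : ℝ) := by
        rw [h6] at h5
        linarith
      calc 1 - (1+(D:ℝ))/x n = (x n - (1+D))/x n := by
            field_simp
        _ ≤ (fMaxStar p k n α : ℝ) / x n := (div_le_div_iff_of_pos_right hx0).mpr h7
    · -- upper
      filter_upwards [hxat.eventually_ge_atTop 1] with n hx2
      have hx0 : (0:ℝ) < x n := lt_of_lt_of_le one_pos hx2
      have h7 := hupper n
      calc (fMaxStar p k n α : ℝ) / x n ≤ (x n + l)/x n :=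
            (div_le_div_iff_of_pos_right hx0).mpr (by exact h7)
        _ = 1 + (l:ℝ)/x n := by field_simp
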